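/- arXiv:1404.4805 — 7 statements merged into one kernel-verified Lean document; each statement's English description precedes it below -/
import Mathlib

section
/- Let g : ℝ^N → ℝ ∪ {+∞} be proper lower semicontinuous convex, y, z ∈ ℝ^N fixed. Define for α > 0 the quantity p_g(α) = (1/α)‖prox_{αg}(y - αz) - y‖, where prox_{αg}(w) = argmin_x (‖x - w‖²/2 + α g(x)). Then p_g is a non-increasing function of α on (0, ∞). -/
open RealInnerProductSpace

variable {N : ℕ}

/-- `p` is the proximal point of `g` with parameter `α > 0` at `w`, i.e. a minimizer of
`x ↦ ‖x - w‖²/2 + α g x`. -/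
def IsProxPt (g : EuclideanSpace ℝ (Fin N) → EReal) (α : ℝ)
    (w p : EuclideanSpace ℝ (Fin N)) : Prop :=
  ∀ x, ((‖p - w‖ ^ 2 / 2 : ℝ) : EReal) + (α : EReal) * g p
      ≤ ((‖x - w‖ ^ 2 / 2 : ℝ) : EReal) + (α : EReal) * g x

/-- A real number bounded by `Y + t*C` for all small positive `t` is bounded by `Y`. -/
lemma le_of_forall_small_aux (X Y C : ℝ) (hC : 0 ≤ C)
    (h : ∀ t : ℝ, 0 < t → t ≤ 1 → X ≤ Y + t * C) : X ≤ Y := by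
  by_contra hlt
  push_neg at hlt
  have hC1 : 0 < C + 1 := by linarith
  set t : ℝ := min 1 ((X - Y) / (2 * (C + 1))) with ht
  have ht0 : 0 < t := lt_min one_pos (div_pos (by linarith) (by linarith))
  have ht1 : t ≤ 1 := min_le_left _ _
  have h2 := h t ht0 ht1
  have htle : t ≤ (X - Y) / (2 * (C + 1)) := min_le_right _ _
  rw [le_div_iff₀ (by linarith)] at htle
  nlinarith [mul_nonneg ht0.le hC]

/-- Subgradient-type inequality at a proximal point. -/
lemma prox_subgrad_aux (g : EuclideanSpace ℝ (Fin N) → EReal)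
    (hconv : ∀ (x y : EuclideanSpace ℝ (Fin N)) (a b : ℝ), 0 ≤ a → 0 ≤ b → a + b = 1 →
      g (a • x + b • y) ≤ (a : EReal) * g x + (b : EReal) * g y)
    (α : ℝ) (hα : 0 < α) (w p q : EuclideanSpace ℝ (Fin N))
    (hp : IsProxPt g α w p) (a b : ℝ) (ha : g p = (a : EReal)) (hb : g q = (b : EReal)) :
    α * (a - b) ≤ ⟪p - w, q - p⟫ := by
  apply le_of_forall_small_aux _ _ (‖q - p‖ ^ 2 / 2) (by positivity)
  intro t ht0 ht1
  set xt : EuclideanSpace ℝ (Fin N) := (1 - t) • p + t • q with hxt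
  have hgxt : g xt ≤ (((1 - t) * a + t * b : ℝ) : EReal) := by
    have := hconv p q (1 - t) t (by linarith) (le_of_lt ht0) (by ring)
    rw [ha, hb] at this
    calc g xt ≤ ((1 - t : ℝ) : EReal) * (a : EReal) + (t : EReal) * (b : EReal) := this
      _ = (((1 - t) * a + t * b : ℝ) : EReal) := by
          rw [← EReal.coe_mul, ← EReal.coe_mul, ← EReal.coe_add]
  have key := hp xt
  rw [ha] at key
  have key2 : ((‖p - w‖ ^ 2 / 2 : ℝ) : EReal) + (α : EReal) * (a : EReal)
      ≤ ((‖xt - w‖ ^ 2 / 2 : ℝ) : EReal) + (α : EReal) * (((1 - t) * a + t * b : ℝ) : EReal) := by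
    refine key.trans (add_le_add le_rfl ?_)
    exact mul_le_mul_of_nonneg_left hgxt (by exact_mod_cast le_of_lt hα)
  have keyR : ‖p - w‖ ^ 2 / 2 + α * a
      ≤ ‖xt - w‖ ^ 2 / 2 + α * ((1 - t) * a + t * b) := by
    rw [← EReal.coe_mul, ← EReal.coe_add, ← EReal.coe_mul, ← EReal.coe_add] at key2
    exact_mod_cast key2
  have hxtw : xt - w = (p - w) + t • (q - p) := by
    rw [hxt]; module
  have hnorm : ‖xt - w‖ ^ 2 = ‖p - w‖ ^ 2 + 2 * (t * ⟪p - w, q - p⟫) + t ^ 2 * ‖q - p‖ ^ 2 := by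
    rw [hxtw, norm_add_sq_real, real_inner_smul_right, norm_smul, mul_pow]
    rw [Real.norm_eq_abs, abs_of_pos ht0]
  rw [hnorm] at keyR
  have H2 : t * (α * (a - b)) ≤ t * (⟪p - w, q - p⟫ + t * (‖q - p‖ ^ 2 / 2)) := by nlinarith
  exact le_of_mul_le_mul_left H2 ht0

/-- Pure real-arithmetic combination step. -/
lemma real_combine_aux (α₁ α₂ a b nA nB I J : ℝ) (h₁ : 0 < α₁) (h₁₂ : α₁ ≤ α₂)
    (hA : 0 ≤ nA) (hB : 0 ≤ nB) (hcs : I ≤ nA * nB)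
    (S1 : α₁ * (a - b) ≤ I - nA ^ 2 + α₁ * J)
    (S2 : α₂ * (b - a) ≤ -(nB ^ 2 - I) - α₂ * J) :
    α₁ * nB ≤ α₂ * nA := by
  have h₂ : 0 < α₂ := h₁.trans_le h₁₂
  have comb : α₂ * nA ^ 2 + α₁ * nB ^ 2 ≤ (α₁ + α₂) * I := by
    nlinarith [mul_le_mul_of_nonneg_left S1 h₂.le, mul_le_mul_of_nonneg_left S2 h₁.le]
  have hprod : (nA - nB) * (α₂ * nA - α₁ * nB) ≤ 0 := by
    nlinarith [mul_le_mul_of_nonneg_left hcs (by positivity : (0:ℝ) ≤ α₁ + α₂)]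
  by_contra hcon
  push_neg at hcon
  have hab : nA < nB := by nlinarith [mul_nonneg (sub_nonneg.2 h₁₂) hA]
  nlinarith [mul_pos (sub_pos.2 hab) (sub_pos.2 hcon)]

set_option maxHeartbeats 800000 in
/-- **Proximal monotonicity (decreasing part).** For proper lsc convex `g` and fixed `y, z`,
the map `α ↦ (1/α)‖prox_{αg}(y - αz) - y‖` is non-increasing on `(0, ∞)`. -/
theorem prox_residual_div_antitone
    (g : EuclideanSpace ℝ (Fin N) → EReal)
    (hproper : ∃ z, g z ≠ ⊤) (hnobot : ∀ z, g z ≠ ⊥)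
    (hlsc : LowerSemicontinuous g)
    (hconv : ∀ (x y : EuclideanSpace ℝ (Fin N)) (a b : ℝ), 0 ≤ a → 0 ≤ b → a + b = 1 →
      g (a • x + b • y) ≤ (a : EReal) * g x + (b : EReal) * g y)
    (y z : EuclideanSpace ℝ (Fin N))
    (P : ℝ → EuclideanSpace ℝ (Fin N))
    (hP : ∀ α, 0 < α → IsProxPt g α (y - α • z) (P α))
    (α₁ α₂ : ℝ) (h₁ : 0 < α₁) (h₁₂ : α₁ ≤ α₂) :
    (1 / α₂) * ‖P α₂ - y‖ ≤ (1 / α₁) * ‖P α₁ - y‖ := by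
  have h₂ : 0 < α₂ := h₁.trans_le h₁₂
  obtain ⟨x₀, hx₀⟩ := hproper
  -- finiteness of g at the prox points
  have hfin : ∀ α, 0 < α → g (P α) ≠ ⊤ := by
    intro α hα htop
    have key := hP α hα x₀
    rw [htop] at key
    have hl : (α : EReal) * ⊤ = ⊤ := EReal.coe_mul_top_of_pos hα
    rw [hl, EReal.add_top_of_ne_bot (EReal.coe_ne_bot _)] at key
    set c : ℝ := (g x₀).toReal with hc
    have hgc : g x₀ = (c : EReal) := (EReal.coe_toReal hx₀ (hnobot x₀)).symm
    rw [hgc, ← EReal.coe_mul, ← EReal.coe_add] at key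
    exact (not_le.2 (EReal.coe_lt_top _)) key
  set p₁ := P α₁ with hp₁
  set p₂ := P α₂ with hp₂
  set a : ℝ := (g p₁).toReal with hadef
  set b : ℝ := (g p₂).toReal with hbdef
  have hga : g p₁ = (a : EReal) := (EReal.coe_toReal (hfin α₁ h₁) (hnobot p₁)).symm
  have hgb : g p₂ = (b : EReal) := (EReal.coe_toReal (hfin α₂ h₂) (hnobot p₂)).symm
  have S1 := prox_subgrad_aux g hconv α₁ h₁ (y - α₁ • z) p₁ p₂ (hP α₁ h₁) a b hga hgb
  have S2 := prox_subgrad_aux g hconv α₂ h₂ (y - α₂ • z) p₂ p₁ (hP α₂ h₂) b a hgb hga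
  -- rewrite the inner products in terms of q₁ = p₁ - y, q₂ = p₂ - y
  set q₁ := p₁ - y with hq₁
  set q₂ := p₂ - y with hq₂
  have e1 : p₁ - (y - α₁ • z) = q₁ + α₁ • z := by rw [hq₁]; module
  have e2 : p₂ - (y - α₂ • z) = q₂ + α₂ • z := by rw [hq₂]; module
  have e3 : p₂ - p₁ = q₂ - q₁ := by rw [hq₁, hq₂]; module
  have e4 : p₁ - p₂ = -(q₂ - q₁) := by rw [hq₁, hq₂]; module
  rw [e1, e3] at S1
  rw [e2, e4] at S2
  have i1 : ⟪q₁ + α₁ • z, q₂ - q₁⟫ = ⟪q₁, q₂⟫ - ‖q₁‖ ^ 2 + α₁ * ⟪z, q₂ - q₁⟫ := by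
    rw [inner_add_left, inner_sub_right, real_inner_smul_left, real_inner_self_eq_norm_sq]
  have i2 : ⟪q₂ + α₂ • z, -(q₂ - q₁)⟫ = -(‖q₂‖ ^ 2 - ⟪q₂, q₁⟫) - α₂ * ⟪z, q₂ - q₁⟫ := by
    rw [inner_neg_right, inner_add_left, inner_sub_right, real_inner_smul_left,
      real_inner_self_eq_norm_sq]
    ring
  rw [i1] at S1
  rw [i2] at S2
  have hcomm : ⟪q₂, q₁⟫ = ⟪q₁, q₂⟫ := real_inner_comm _ _
  rw [hcomm] at S2
  have hcs : ⟪q₁, q₂⟫ ≤ ‖q₁‖ * ‖q₂‖ := real_inner_le_norm _ _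
  have hkey : α₁ * ‖q₂‖ ≤ α₂ * ‖q₁‖ :=
    real_combine_aux α₁ α₂ a b ‖q₁‖ ‖q₂‖ ⟪q₁, q₂⟫ ⟪z, q₂ - q₁⟫ h₁ h₁₂
      (norm_nonneg _) (norm_nonneg _) hcs S1 S2
  rw [div_mul_eq_mul_div, div_mul_eq_mul_div, one_mul, one_mul, div_le_div_iff₀ h₂ h₁]
  calc ‖q₂‖ * α₁ = α₁ * ‖q₂‖ := by ring
    _ ≤ α₂ * ‖q₁‖ := hkey
    _ = ‖q₁‖ * α₂ := by ring
end

section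
/- Let g : ℝ^N → ℝ ∪ {+∞} be proper lower semicontinuous convex, y, z ∈ ℝ^N fixed. Define for α > 0 the quantity q_g(α) = ‖prox_{αg}(y - αz) - y‖, where prox_{αg}(w) = argmin_x (‖x - w‖²/2 + α g(x)). Then q_g is a non-decreasing function of α on (0, ∞). -/
open RealInnerProductSpace

variable {N : ℕ}

/-- **Proximal monotonicity (increasing part).** For proper lsc convex `g` and fixed `y, z`,
the map `α ↦ ‖prox_{αg}(y - αz) - y‖` is non-decreasing on `(0, ∞)`. -/
theorem prox_residual_monotone
    (g : EuclideanSpace ℝ (Fin N) → EReal)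
    (hproper : ∃ z, g z ≠ ⊤) (hnobot : ∀ z, g z ≠ ⊥)
    (hlsc : LowerSemicontinuous g)
    (hconv : ∀ (x y : EuclideanSpace ℝ (Fin N)) (a b : ℝ), 0 ≤ a → 0 ≤ b → a + b = 1 →
      g (a • x + b • y) ≤ (a : EReal) * g x + (b : EReal) * g y)
    (y z : EuclideanSpace ℝ (Fin N))
    (P : ℝ → EuclideanSpace ℝ (Fin N))
    (hP : ∀ α, 0 < α → IsProxPt g α (y - α • z) (P α))
    (α₁ α₂ : ℝ) (h₁ : 0 < α₁) (h₁₂ : α₁ ≤ α₂) :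
    ‖P α₁ - y‖ ≤ ‖P α₂ - y‖ := by
  rcases eq_or_lt_of_le h₁₂ with heq | hlt
  · rw [heq]
  have h₂ : 0 < α₂ := h₁.trans hlt
  -- g (P α) is finite for α > 0
  have key : ∀ α, 0 < α → g (P α) ≠ ⊤ := by
    intro α hα htop
    obtain ⟨x₀, hx₀⟩ := hproper
    have h := hP α hα x₀
    rw [htop, EReal.mul_top_of_pos (by exact_mod_cast hα),
      EReal.add_top_of_ne_bot (EReal.coe_ne_bot _)] at h
    have hmul : (α : EReal) * g x₀ ≠ ⊤ := by
      obtain ⟨r, hr⟩ : ∃ r : ℝ, g x₀ = r :=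
        ⟨(g x₀).toReal, (EReal.coe_toReal hx₀ (hnobot x₀)).symm⟩
      rw [hr, ← EReal.coe_mul]
      exact EReal.coe_ne_top _
    exact (EReal.add_lt_top (EReal.coe_ne_top _) hmul).ne (top_le_iff.mp h)
  -- real-valued optimality inequality
  have hreal : ∀ α, 0 < α → ∀ x, g x ≠ ⊤ →
      ‖P α - (y - α • z)‖ ^ 2 / 2 + α * (g (P α)).toReal
        ≤ ‖x - (y - α • z)‖ ^ 2 / 2 + α * (g x).toReal := by
    intro α hα x hx
    have h := hP α hα x
    rw [← EReal.coe_toReal (key α hα) (hnobot _), ← EReal.coe_toReal hx (hnobot x)] at h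
    rw [← EReal.coe_mul, ← EReal.coe_add, ← EReal.coe_mul, ← EReal.coe_add,
      EReal.coe_le_coe_iff] at h
    exact h
  have expand : ∀ (p : EuclideanSpace ℝ (Fin N)) (α : ℝ),
      ‖p - (y - α • z)‖ ^ 2 = ‖p - y‖ ^ 2 + 2 * α * ⟪p - y, z⟫ + α ^ 2 * ‖z‖ ^ 2 := by
    intro p α
    have h : p - (y - α • z) = (p - y) + α • z := by abel
    rw [h, norm_add_sq_real, real_inner_smul_right, norm_smul]
    simp [mul_pow, sq_abs]
    ring
  have A1 := hreal α₁ h₁ (P α₂) (key α₂ h₂)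
  have A2 := hreal α₂ h₂ (P α₁) (key α₁ h₁)
  rw [expand (P α₁) α₁, expand (P α₂) α₁] at A1
  rw [expand (P α₂) α₂, expand (P α₁) α₂] at A2
  have hUV : ‖P α₁ - y‖ ^ 2 ≤ ‖P α₂ - y‖ ^ 2 := by
    nlinarith [mul_le_mul_of_nonneg_left A1 (le_of_lt h₂),
      mul_le_mul_of_nonneg_left A2 (le_of_lt h₁)]
  nlinarith [norm_nonneg (P α₁ - y), norm_nonneg (P α₂ - y)]
end

section
/- Let L_n > 0, c₁ > 0, c₂ > 0 with c₁ and c₂ sufficiently small, and let δ_{n-1} ≥ c₂ be given. Set b = (δ_{n-1} + L_n/2)/(c₂ + L_n/2). Then b ≥ 1, and any β_n ∈ [0, 1) satisfying β_n ≤ (b - 1)/(b - 1/2) admits a step size α_n > 0 with (1 - β_n/2)/(δ_{n-1} + L_n/2) ≤ α_n ≤ (1 - β_n)/(c₂ + L_n/2); for such α_n, setting δ_n = 1/α_n - L_n/2 - β_n/(2α_n) and γ_n = 1/α_n - L_n/2 - β_n/α_n, one has δ_n ≤ δ_{n-1}, γ_n ≥ c₂, and δ_n ≥ γ_n. -/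
/-- **Existence of feasible iPiano step size parameters.** Given `L_n > 0`, `c₂ > 0` and
`δ_{n-1} ≥ c₂`, set `b = (δ_{n-1} + L_n/2)/(c₂ + L_n/2)`. Then `b ≥ 1`, and for any
`β_n ∈ [0, 1)` with `β_n ≤ (b-1)/(b-1/2)` there exists a step size `α_n > 0` with
`(1 - β_n/2)/(δ_{n-1} + L_n/2) ≤ α_n ≤ (1 - β_n)/(c₂ + L_n/2)`; for any such `α_n`,
the quantities `δ_n = 1/α_n - L_n/2 - β_n/(2α_n)` and `γ_n = 1/α_n - L_n/2 - β_n/α_n`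
satisfy `δ_n ≤ δ_{n-1}`, `γ_n ≥ c₂` and `δ_n ≥ γ_n`. -/
theorem ipiano_step_size_feasibility (L c₁ c₂ δprev b : ℝ)
    (hL : 0 < L) (hc₁ : 0 < c₁) (hc₂ : 0 < c₂) (hδ : c₂ ≤ δprev)
    (hb : b = (δprev + L / 2) / (c₂ + L / 2)) :
    1 ≤ b ∧
    ∀ β : ℝ, 0 ≤ β → β < 1 → β ≤ (b - 1) / (b - 1 / 2) →
      ((∃ α : ℝ, 0 < α ∧ (1 - β / 2) / (δprev + L / 2) ≤ α ∧ α ≤ (1 - β) / (c₂ + L / 2)) ∧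
       ∀ α : ℝ, 0 < α → (1 - β / 2) / (δprev + L / 2) ≤ α → α ≤ (1 - β) / (c₂ + L / 2) →
         (1 / α - L / 2 - β / (2 * α) ≤ δprev ∧
          c₂ ≤ 1 / α - L / 2 - β / α ∧
          1 / α - L / 2 - β / α ≤ 1 / α - L / 2 - β / (2 * α))) := by
  have hD2 : 0 < c₂ + L / 2 := by linarith
  have hD1 : 0 < δprev + L / 2 := by linarith
  have hb1 : 1 ≤ b := by
    rw [hb, le_div_iff₀ hD2]; linarith
  refine ⟨hb1, fun β hβ0 hβ1 hβb => ?_⟩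
  -- key inequality: (1 - β/2)/D1 ≤ (1-β)/D2
  have hbden : (0:ℝ) < b - 1/2 := by linarith
  have key : (1 - β / 2) / (δprev + L / 2) ≤ (1 - β) / (c₂ + L / 2) := by
    rw [div_le_div_iff₀ hD1 hD2]
    have h1 : β * (b - 1/2) ≤ b - 1 := (le_div_iff₀ hbden).mp hβb
    have hbeq : b * (c₂ + L / 2) = δprev + L / 2 := by
      rw [hb]; field_simp
    nlinarith [h1, hD2]
  refine ⟨⟨(1 - β) / (c₂ + L / 2), div_pos (by linarith) hD2, key, le_refl _⟩, ?_⟩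
  intro α hα hα1 hα2
  have hαne : α ≠ 0 := ne_of_gt hα
  have h1 : (1 - β / 2) ≤ α * (δprev + L / 2) := by
    rw [div_le_iff₀ hD1] at hα1; linarith
  have h2 : α * (c₂ + L / 2) ≤ (1 - β) := by
    rw [le_div_iff₀ hD2] at hα2; linarith
  have e1 : 1 / α - L / 2 - β / (2 * α) = (1 - β / 2) / α - L / 2 := by
    field_simp; ring
  have e2 : 1 / α - L / 2 - β / α = (1 - β) / α - L / 2 := by
    field_simp; ring
  refine ⟨?_, ?_, ?_⟩
  · rw [e1, sub_le_iff_le_add, div_le_iff₀ hα]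
    nlinarith
  · rw [e2, le_sub_iff_add_le, le_div_iff₀ hα]
    nlinarith
  · have h : β / (2 * α) ≤ β / α := by
      gcongr
      linarith
    linarith
end

section
/- Let h = f + g with f ∈ C¹ having L_n-Lipschitz gradient on dom g (so the descent lemma f(x^{n+1}) ≤ f(x^n) + ⟨∇f(x^n), x^{n+1}-x^n⟩ + (L_n/2)‖x^{n+1}-x^n‖² holds) and g proper lsc convex. Suppose (x^n−x^{n+1})/α_n − ∇f(x^n) + (β_n/α_n)(x^n−x^{n-1}) ∈ ∂g(x^{n+1}). Then h(x^{n+1}) + δ_n Δ_{n+1}² ≤ h(x^n) + δ_n Δ_n² − γ_n Δ_n², where Δ_n = ‖x^n − x^{n-1}‖, δ_n = 1/α_n − L_n/2 − β_n/(2α_n), and γ_n = 1/α_n − L_n/2 − β_n/α_n. -/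
open RealInnerProductSpace

variable {N : ℕ}

/-- **Key Lyapunov descent inequality for iPiano.** Let `h = f + g` with `f ∈ C¹` whose
gradient satisfies the descent lemma with constant `L_n`, and `g` proper lsc convex.
If `(x^n - x^{n+1})/α_n - ∇f(x^n) + (β_n/α_n)(x^n - x^{n-1}) ∈ ∂g(x^{n+1})` (convex
subdifferential), then
`h(x^{n+1}) + δ_n Δ_{n+1}² ≤ h(x^n) + δ_n Δ_n² - γ_n Δ_n²`,
where `Δ_n = ‖x^n - x^{n-1}‖`, `δ_n = 1/α_n - L_n/2 - β_n/(2α_n)` and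
`γ_n = 1/α_n - L_n/2 - β_n/α_n`. -/
theorem ipiano_lyapunov_descent
    (f : EuclideanSpace ℝ (Fin N) → ℝ)
    (f' : EuclideanSpace ℝ (Fin N) → EuclideanSpace ℝ (Fin N))
    (hf : ∀ x, HasGradientAt f (f' x) x)
    (g : EuclideanSpace ℝ (Fin N) → EReal)
    (hproper : ∃ z, g z ≠ ⊤) (hnobot : ∀ z, g z ≠ ⊥)
    (hlsc : LowerSemicontinuous g)
    (hconv : ∀ (x y : EuclideanSpace ℝ (Fin N)) (a b : ℝ), 0 ≤ a → 0 ≤ b → a + b = 1 →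
      g (a • x + b • y) ≤ (a : EReal) * g x + (b : EReal) * g y)
    (Ln αn βn δn γn : ℝ) (hα : 0 < αn) (hβ : 0 ≤ βn)
    (xm1 x0 x1 : EuclideanSpace ℝ (Fin N))
    -- descent lemma for `f` with constant `L_n` between `x^n` and `x^{n+1}`
    (hdescent : f x1 ≤ f x0 + ⟪f' x0, x1 - x0⟫ + Ln / 2 * ‖x1 - x0‖ ^ 2)
    -- the iPiano optimality condition: the given vector is a convex subgradient of `g` at `x^{n+1}`
    (hsubgrad : ∀ z, g x1 +
        ((⟪(1 / αn) • (x0 - x1) - f' x0 + (βn / αn) • (x0 - xm1), z - x1⟫ : ℝ) : EReal)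
        ≤ g z)
    (hδ : δn = 1 / αn - Ln / 2 - βn / (2 * αn))
    (hγ : γn = 1 / αn - Ln / 2 - βn / αn) :
    ((f x1 : EReal) + g x1) + ((δn * ‖x1 - x0‖ ^ 2 : ℝ) : EReal)
      ≤ ((f x0 : EReal) + g x0)
        + ((δn * ‖x0 - xm1‖ ^ 2 - γn * ‖x0 - xm1‖ ^ 2 : ℝ) : EReal) := by
  by_cases htop : g x0 = ⊤
  · rw [htop]
    rw [show (f x0 : EReal) + ⊤ = ⊤ from rfl]
    exact le_top
  lift g x0 to ℝ using ⟨htop, hnobot x0⟩ with r0 hr0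
  have hsub0 := hsubgrad x0
  have hx1top : g x1 ≠ ⊤ := by
    intro h
    rw [h] at hsub0
    rw [← hr0] at hsub0
    simp at hsub0
  lift g x1 to ℝ using ⟨hx1top, hnobot x1⟩ with r1 hr1
  have hsubR : r1 + ⟪(1 / αn) • (x0 - x1) - f' x0 + (βn / αn) • (x0 - xm1), x0 - x1⟫ ≤ r0 := by
    rw [← hr0] at hsub0
    exact_mod_cast hsub0
  have hnorm : ‖x0 - x1‖ = ‖x1 - x0‖ := norm_sub_rev _ _
  have hipval : (⟪(1 / αn) • (x0 - x1) - f' x0 + (βn / αn) • (x0 - xm1), x0 - x1⟫ : ℝ)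
      = (1 / αn) * ‖x1 - x0‖ ^ 2 + ⟪f' x0, x1 - x0⟫ - (βn / αn) * ⟪x0 - xm1, x1 - x0⟫ := by
    have e1 : (⟪f' x0, x0 - x1⟫ : ℝ) = -⟪f' x0, x1 - x0⟫ := by
      rw [show x0 - x1 = -(x1 - x0) from by abel, inner_neg_right]
    have e2 : (⟪x0 - xm1, x0 - x1⟫ : ℝ) = -⟪x0 - xm1, x1 - x0⟫ := by
      rw [show x0 - x1 = -(x1 - x0) from by abel, inner_neg_right]
    rw [inner_add_left, inner_sub_left, real_inner_smul_left, real_inner_smul_left,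
      real_inner_self_eq_norm_sq, hnorm, e1, e2]
    ring
  have hcs : 2 * (⟪x0 - xm1, x1 - x0⟫ : ℝ) ≤ ‖x0 - xm1‖ ^ 2 + ‖x1 - x0‖ ^ 2 := by
    have h := sq_nonneg ‖(x0 - xm1) - (x1 - x0)‖
    rw [norm_sub_sq_real] at h
    linarith
  have hβα : 0 ≤ βn / αn := div_nonneg hβ hα.le
  have hmul : (βn / αn) * (2 * (⟪x0 - xm1, x1 - x0⟫ : ℝ))
      ≤ (βn / αn) * (‖x0 - xm1‖ ^ 2 + ‖x1 - x0‖ ^ 2) :=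
    mul_le_mul_of_nonneg_left hcs hβα
  have hhalf : βn / (2 * αn) = (βn / αn) / 2 := by ring
  have key : f x1 + r1 + δn * ‖x1 - x0‖ ^ 2
      ≤ f x0 + r0 + (δn * ‖x0 - xm1‖ ^ 2 - γn * ‖x0 - xm1‖ ^ 2) := by
    rw [hipval] at hsubR
    rw [hδ, hγ, hhalf]
    nlinarith [hsubR, hdescent, hmul]
  rw [← EReal.coe_add, ← EReal.coe_add, ← EReal.coe_add, ← EReal.coe_add, EReal.coe_le_coe_iff]
  linarith [key]
end

section
/- Let (x^n) be a sequence in ℝ^N with Δ_n = ‖x^n − x^{n-1}‖, and suppose there exist δ_n ≥ γ_n ≥ c₂ > 0 with δ_n monotonically decreasing such that h(x^{n+1}) + δ_{n+1}Δ_{n+1}² ≤ h(x^n) + δ_n Δ_n² − γ_n Δ_n² for all n ≥ 0, and h is bounded below by h̲ > −∞. Then Σ_{n=0}^∞ Δ_n² < ∞ and consequently Δ_n → 0 as n → ∞. -/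
open Filter Topology

variable {N : ℕ}

/-- **Square-summability of the iterate differences.** If the Lyapunov descent inequality
`h(x^{n+1}) + δ_{n+1}Δ_{n+1}² ≤ h(x^n) + δ_n Δ_n² - γ_n Δ_n²` holds with
`δ_n ≥ γ_n ≥ c₂ > 0`, `δ` monotonically decreasing, and `h` bounded below by `h̲`,
then `∑ Δ_n² < ∞` and `Δ_n → 0`. -/
theorem ipiano_delta_sq_summable
    (h : EuclideanSpace ℝ (Fin N) → EReal)
    (x : ℕ → EuclideanSpace ℝ (Fin N))
    (Δ : ℕ → ℝ) (hΔ0 : Δ 0 = 0) (hΔ : ∀ n, Δ (n + 1) = ‖x (n + 1) - x n‖)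
    (δ γ : ℕ → ℝ) (c₂ : ℝ) (hc₂ : 0 < c₂)
    (hγ : ∀ n, c₂ ≤ γ n) (hδγ : ∀ n, γ n ≤ δ n) (hδmono : Antitone δ)
    (hlb : ℝ) (hbdd : ∀ y, (hlb : EReal) ≤ h y)
    (hdom : h (x 0) ≠ ⊤)
    (hdescent : ∀ n, h (x (n + 1)) + ((δ (n + 1) * Δ (n + 1) ^ 2 : ℝ) : EReal)
        ≤ h (x n) + ((δ n * Δ n ^ 2 - γ n * Δ n ^ 2 : ℝ) : EReal)) :
    Summable (fun n => Δ n ^ 2) ∧ Tendsto Δ atTop (𝓝 0) := by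
  -- h (x n) is never ⊤
  have hne : ∀ n, h (x n) ≠ ⊤ := by
    intro n
    induction n with
    | zero => exact hdom
    | succ k ih =>
      intro htop
      have := hdescent k
      rw [htop] at this
      have hlhs : (⊤ : EReal) + ((δ (k + 1) * Δ (k + 1) ^ 2 : ℝ) : EReal) = ⊤ := by
        exact EReal.top_add_of_ne_bot (by exact_mod_cast EReal.coe_ne_bot _)
      rw [hlhs, top_le_iff] at this
      exact absurd this (EReal.add_lt_top ih (EReal.coe_ne_top _)).ne
  have hnb : ∀ n, h (x n) ≠ ⊥ := fun n =>
    ne_bot_of_le_ne_bot (EReal.coe_ne_bot hlb) (hbdd (x n))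
  set f : ℕ → ℝ := fun n => (h (x n)).toReal with hf
  have hfe : ∀ n, h (x n) = ((f n : ℝ) : EReal) := fun n =>
    (EReal.coe_toReal (hne n) (hnb n)).symm
  have hflb : ∀ n, hlb ≤ f n := fun n => by
    have := hbdd (x n); rw [hfe n] at this; exact_mod_cast this
  -- real descent inequality
  have hreal : ∀ n, f (n + 1) + δ (n + 1) * Δ (n + 1) ^ 2
      ≤ f n + (δ n * Δ n ^ 2 - γ n * Δ n ^ 2) := by
    intro n
    have := hdescent n
    rw [hfe n, hfe (n + 1), ← EReal.coe_add, ← EReal.coe_add] at this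
    exact_mod_cast this
  have hΔnn : ∀ n, 0 ≤ Δ n := by
    intro n; cases n with
    | zero => rw [hΔ0]
    | succ k => rw [hΔ k]; exact norm_nonneg _
  have hδpos : ∀ n, 0 < δ n := fun n => lt_of_lt_of_le hc₂ (le_trans (hγ n) (hδγ n))
  have hsqnn : ∀ n, 0 ≤ Δ n ^ 2 := fun n => sq_nonneg _
  -- key: c₂ Δn² ≤ V n − V (n+1), where V n = f n + δ n Δ n²
  set V : ℕ → ℝ := fun n => f n + δ n * Δ n ^ 2 with hV
  have hkey : ∀ n, c₂ * Δ n ^ 2 ≤ V n - V (n + 1) := by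
    intro n
    have h1 := hreal n
    have h2 : c₂ * Δ n ^ 2 ≤ γ n * Δ n ^ 2 :=
      mul_le_mul_of_nonneg_right (hγ n) (hsqnn n)
    simp only [hV]
    nlinarith
  have hVlb : ∀ n, hlb ≤ V n := fun n =>
    le_trans (hflb n) (le_add_of_nonneg_right (mul_nonneg (hδpos n).le (hsqnn n)))
  have hsum : ∀ n, ∑ k ∈ Finset.range n, c₂ * Δ k ^ 2 ≤ V 0 - hlb := by
    intro n
    calc ∑ k ∈ Finset.range n, c₂ * Δ k ^ 2
        ≤ ∑ k ∈ Finset.range n, (V k - V (k + 1)) :=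
          Finset.sum_le_sum fun k _ => hkey k
      _ = V 0 - V n := by rw [Finset.sum_range_sub']
      _ ≤ V 0 - hlb := by linarith [hVlb n]
  have hsummable : Summable (fun n => c₂ * Δ n ^ 2) :=
    summable_of_sum_range_le (fun n => mul_nonneg hc₂.le (hsqnn n)) hsum
  have hsummable' : Summable (fun n => Δ n ^ 2) := by
    have := hsummable.mul_left c₂⁻¹
    simpa [mul_comm, inv_mul_cancel_left₀ hc₂.ne'] using this
  refine ⟨hsummable', ?_⟩
  have hsq0 : Tendsto (fun n => Δ n ^ 2) atTop (𝓝 0) := hsummable'.tendsto_atTop_zero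
  have : Tendsto (fun n => Real.sqrt (Δ n ^ 2)) atTop (𝓝 (Real.sqrt 0)) :=
    (Real.continuous_sqrt.tendsto 0).comp hsq0
  simpa [Real.sqrt_sq (hΔnn _)] using this
end

section
/- Let (x^n) be a sequence in ℝ^N satisfying the Lyapunov descent inequality H_{δ_{n+1}}(x^{n+1},x^n) ≤ H_{δ_n}(x^n,x^{n-1}) − γ_n Δ_n² with γ_n ≥ c₂ > 0, δ_n ≥ γ_n, δ_n decreasing, h bounded below, where H_δ(x,y) = h(x) + δ‖x−y‖². Then the sequence of function values (h(x^n)) converges. -/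
open Filter Topology

variable {N : ℕ}

/-- **Convergence of the function values.** Under the iPiano Lyapunov descent inequality
with `γ_n ≥ c₂ > 0`, `δ_n ≥ γ_n`, `δ` decreasing, and `h` bounded below, the sequence of
function values `(h(x^n))` converges. -/
theorem ipiano_function_values_converge
    (h : EuclideanSpace ℝ (Fin N) → EReal)
    (x : ℕ → EuclideanSpace ℝ (Fin N))
    (Δ : ℕ → ℝ) (hΔ0 : Δ 0 = 0) (hΔ : ∀ n, Δ (n + 1) = ‖x (n + 1) - x n‖)
    (δ γ : ℕ → ℝ) (c₂ : ℝ) (hc₂ : 0 < c₂)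
    (hγ : ∀ n, c₂ ≤ γ n) (hδγ : ∀ n, γ n ≤ δ n) (hδmono : Antitone δ)
    (hlb : ℝ) (hbdd : ∀ y, (hlb : EReal) ≤ h y)
    (hdom : h (x 0) ≠ ⊤)
    (hdescent : ∀ n, h (x (n + 1)) + ((δ (n + 1) * Δ (n + 1) ^ 2 : ℝ) : EReal)
        ≤ h (x n) + ((δ n * Δ n ^ 2 - γ n * Δ n ^ 2 : ℝ) : EReal)) :
    ∃ l : ℝ, Tendsto (fun n => h (x n)) atTop (𝓝 (l : EReal)) := by
  have hδpos : ∀ n, 0 < δ n := fun n => lt_of_lt_of_le hc₂ ((hγ n).trans (hδγ n))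
  have hsq : ∀ n, (0:ℝ) ≤ Δ n ^ 2 := fun n => sq_nonneg _
  have hbot : ∀ n, h (x n) ≠ ⊥ := fun n =>
    ne_bot_of_le_ne_bot (by simp) (hbdd (x n))
  -- all values are finite
  have hfin : ∀ n, h (x n) ≠ ⊤ := by
    intro n
    induction n with
    | zero => exact hdom
    | succ n ih =>
      intro htop
      have h1 := hdescent n
      rw [htop] at h1
      rw [EReal.top_add_coe] at h1
      have h2 : h (x n) + ((δ n * Δ n ^ 2 - γ n * Δ n ^ 2 : ℝ) : EReal) ≠ ⊤ :=
        (EReal.add_lt_top ih (EReal.coe_ne_top _)).ne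
      exact h2 (top_le_iff.mp h1)
  set b : ℕ → ℝ := fun n => (h (x n)).toReal with hbdef
  have hb : ∀ n, h (x n) = ((b n : ℝ) : EReal) := fun n =>
    (EReal.coe_toReal (hfin n) (hbot n)).symm
  have hblb : ∀ n, hlb ≤ b n := by
    intro n
    have := hbdd (x n)
    rw [hb n] at this
    exact_mod_cast this
  -- real descent inequality
  have hdesc' : ∀ n, b (n + 1) + δ (n + 1) * Δ (n + 1) ^ 2
      ≤ b n + (δ n * Δ n ^ 2 - γ n * Δ n ^ 2) := by
    intro n
    have h1 := hdescent n
    rw [hb n, hb (n + 1), ← EReal.coe_add, ← EReal.coe_add] at h1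
    exact_mod_cast h1
  set a : ℕ → ℝ := fun n => b n + δ n * Δ n ^ 2 with hadef
  have hstep : ∀ n, a (n + 1) + γ n * Δ n ^ 2 ≤ a n := by
    intro n
    have := hdesc' n
    simp only [hadef]
    linarith
  have hmono : Antitone a := antitone_nat_of_succ_le fun n => by
    have := hstep n
    have h2 : 0 ≤ γ n * Δ n ^ 2 :=
      mul_nonneg (le_trans hc₂.le (hγ n)) (hsq n)
    linarith
  have habdd : BddBelow (Set.range a) := by
    refine ⟨hlb, ?_⟩
    rintro _ ⟨n, rfl⟩
    have := hblb n
    have h2 : 0 ≤ δ n * Δ n ^ 2 := mul_nonneg (hδpos n).le (hsq n)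
    simp only [hadef]; linarith
  set l : ℝ := ⨅ n, a n with hldef
  have hal : Tendsto a atTop (𝓝 l) := tendsto_atTop_ciInf hmono habdd
  -- Δ n ^ 2 → 0
  have hdiff : Tendsto (fun n => a n - a (n + 1)) atTop (𝓝 0) := by
    have := hal.sub (hal.comp (tendsto_add_atTop_nat 1))
    simpa using this
  have hΔ2 : Tendsto (fun n => Δ n ^ 2) atTop (𝓝 0) := by
    have hub : ∀ n, Δ n ^ 2 ≤ (a n - a (n + 1)) / c₂ := by
      intro n
      have h1 := hstep n
      have h2 : c₂ * Δ n ^ 2 ≤ γ n * Δ n ^ 2 :=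
        mul_le_mul_of_nonneg_right (hγ n) (hsq n)
      rw [le_div_iff₀ hc₂]
      nlinarith
    have htop : Tendsto (fun n => (a n - a (n + 1)) / c₂) atTop (𝓝 0) := by
      simpa using hdiff.div_const c₂
    exact squeeze_zero (fun n => hsq n) hub htop
  have hδΔ : Tendsto (fun n => δ n * Δ n ^ 2) atTop (𝓝 0) := by
    have hub : ∀ n, δ n * Δ n ^ 2 ≤ δ 0 * Δ n ^ 2 := fun n =>
      mul_le_mul_of_nonneg_right (hδmono (Nat.zero_le n)) (hsq n)
    have htop : Tendsto (fun n => δ 0 * Δ n ^ 2) atTop (𝓝 0) := by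
      simpa using hΔ2.const_mul (δ 0)
    exact squeeze_zero (fun n => mul_nonneg (hδpos n).le (hsq n)) hub htop
  have hbl : Tendsto b atTop (𝓝 l) := by
    have := hal.sub hδΔ
    simpa [hadef] using this
  refine ⟨l, ?_⟩
  have : Tendsto (fun n => ((b n : ℝ) : EReal)) atTop (𝓝 (l : EReal)) :=
    EReal.tendsto_coe.2 hbl
  simpa only [← hb] using this
end

section
/- For (x^n) generated by iPiano with α_n ≥ c₁ ∈ (0,1] and β_n ∈ [0,1), with x^{-1} = x^0, it holds for all N that Σ_{n=0}^N ‖r(x^n)‖ ≤ (2/c₁) Σ_{n=0}^N ‖x^{n+1} − x^n‖, where r is the proximal residual at step size 1. -/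
open RealInnerProductSpace

variable {N : ℕ}

section AuxLemmas

open Filter Topology

variable {g : EuclideanSpace ℝ (Fin N) → EReal}

lemma prox_ne_top (hproper : ∃ z, g z ≠ ⊤) (hnobot : ∀ z, g z ≠ ⊥)
    {α : ℝ} (hα : 0 < α) {w p : EuclideanSpace ℝ (Fin N)} (hp : IsProxPt g α w p) :
    g p ≠ ⊤ := by
  obtain ⟨z, hz⟩ := hproper
  intro htop
  have h := hp z
  rw [htop, EReal.coe_mul_top_of_pos hα, EReal.add_top_of_ne_bot (EReal.coe_ne_bot _),
    top_le_iff] at h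
  rw [← EReal.coe_toReal hz (hnobot z), ← EReal.coe_mul, ← EReal.coe_add] at h
  exact EReal.coe_ne_top _ h

lemma prox_subgrad (hnobot : ∀ z, g z ≠ ⊥)
    (hconv : ∀ (x y : EuclideanSpace ℝ (Fin N)) (a b : ℝ), 0 ≤ a → 0 ≤ b → a + b = 1 →
      g (a • x + b • y) ≤ (a : EReal) * g x + (b : EReal) * g y)
    {α : ℝ} (hα : 0 < α) {w p : EuclideanSpace ℝ (Fin N)} (hp : IsProxPt g α w p)
    (hptop : g p ≠ ⊤) {x : EuclideanSpace ℝ (Fin N)} (hxtop : g x ≠ ⊤) :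
    ⟪w - p, x - p⟫ ≤ α * ((g x).toReal - (g p).toReal) := by
  set P := (g p).toReal with hP
  set X := (g x).toReal with hX
  have hgp : g p = (P : EReal) := (EReal.coe_toReal hptop (hnobot p)).symm
  have hgx : g x = (X : EReal) := (EReal.coe_toReal hxtop (hnobot x)).symm
  have key : ∀ t : ℝ, 0 < t → t ≤ 1 →
      ⟪w - p, x - p⟫ ≤ α * (X - P) + t * (‖x - p‖ ^ 2 / 2) := by
    intro t ht ht1
    have hcv := hconv p x (1 - t) t (by linarith) ht.le (by ring)
    rw [hgp, hgx, ← EReal.coe_mul, ← EReal.coe_mul, ← EReal.coe_add] at hcv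
    have h2 : (α : EReal) * g ((1 - t) • p + t • x)
        ≤ ((α * ((1 - t) * P + t * X) : ℝ) : EReal) := by
      rw [EReal.coe_mul]
      exact mul_le_mul_of_nonneg_left hcv (by exact_mod_cast hα.le)
    have h3 := (hp ((1 - t) • p + t • x)).trans (add_le_add_right h2 _)
    rw [hgp, ← EReal.coe_mul, ← EReal.coe_add, ← EReal.coe_add] at h3
    have h4 : ‖p - w‖ ^ 2 / 2 + α * P
        ≤ ‖(1 - t) • p + t • x - w‖ ^ 2 / 2 + α * ((1 - t) * P + t * X) := by
      exact_mod_cast h3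
    have hvec : (1 - t) • p + t • x - w = (p - w) + t • (x - p) := by module
    rw [hvec] at h4
    have hnorm : ‖(p - w) + t • (x - p)‖ ^ 2
        = ‖p - w‖ ^ 2 + 2 * (t * ⟪p - w, x - p⟫) + t ^ 2 * ‖x - p‖ ^ 2 := by
      rw [norm_add_sq_real, real_inner_smul_right, norm_smul, Real.norm_eq_abs,
        abs_of_pos ht, mul_pow]
    rw [hnorm] at h4
    have hiner : ⟪w - p, x - p⟫ = -⟪p - w, x - p⟫ := by
      rw [show w - p = -(p - w) by abel, inner_neg_left]
    rw [hiner]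
    nlinarith [h4]
  by_contra hcon
  push_neg at hcon
  set K := ‖x - p‖ ^ 2 / 2 with hKdef
  have hK0 : 0 ≤ K := by positivity
  set ε := ⟪w - p, x - p⟫ - α * (X - P) with hε
  have hε0 : 0 < ε := by simp only [hε]; linarith
  set t := min 1 (ε / (K + 1)) with htdef
  have ht0 : 0 < t := lt_min one_pos (div_pos hε0 (by linarith))
  have hkey := key t ht0 (min_le_left _ _)
  have h1 : t * (K + 1) ≤ ε := by
    calc t * (K + 1) ≤ (ε / (K + 1)) * (K + 1) :=
          mul_le_mul_of_nonneg_right (min_le_right _ _) (by linarith)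
      _ = ε := div_mul_cancel₀ _ (by linarith)
  nlinarith [hkey, h1, ht0]

lemma prox_exists (hnobot : ∀ z, g z ≠ ⊥) (hlsc : LowerSemicontinuous g)
    (u : EuclideanSpace ℝ (Fin N)) (L : ℝ)
    (hmin : ∀ z, ((L + ⟪u, z⟫ : ℝ) : EReal) ≤ g z)
    (z₀ : EuclideanSpace ℝ (Fin N)) (hz₀ : g z₀ ≠ ⊤)
    {α : ℝ} (hα : 0 < α) (w : EuclideanSpace ℝ (Fin N)) :
    ∃ p, IsProxPt g α w p := by
  classical
  set h : EuclideanSpace ℝ (Fin N) → EReal :=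
    fun z => ((‖z - w‖ ^ 2 / 2 : ℝ) : EReal) + (α : EReal) * g z with hh
  -- lower bound for h
  have hlow : ∀ z, ((‖z - w‖ ^ 2 / 2 + α * (L + ⟪u, z⟫) : ℝ) : EReal) ≤ h z := by
    intro z
    have := mul_le_mul_of_nonneg_left (hmin z) (by exact_mod_cast hα.le : (0:EReal) ≤ (α:ℝ))
    rw [← EReal.coe_mul] at this
    calc ((‖z - w‖ ^ 2 / 2 + α * (L + ⟪u, z⟫) : ℝ) : EReal)
        = ((‖z - w‖ ^ 2 / 2 : ℝ) : EReal) + ((α * (L + ⟪u, z⟫) : ℝ) : EReal) := by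
          rw [← EReal.coe_add]
      _ ≤ h z := add_le_add_right this _
  -- lower semicontinuity of h
  have hq : Continuous (fun z : EuclideanSpace ℝ (Fin N) => ‖z - w‖ ^ 2 / 2) := by
    fun_prop
  have hlsch : LowerSemicontinuous h := by
    intro z₀' y hy
    induction y using EReal.rec with
    | bot =>
      filter_upwards with z
      exact lt_of_lt_of_le (by exact_mod_cast EReal.bot_lt_coe _) (hlow z)
    | top => exact absurd hy (by simp)
    | coe c =>
      -- find real t with ↑t < g z₀' and q z₀' + α * t > c
      obtain ⟨t, htlt, htgt⟩ : ∃ t : ℝ, ((t : ℝ) : EReal) < g z₀' ∧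
          c < ‖z₀' - w‖ ^ 2 / 2 + α * t := by
        by_cases htop : g z₀' = ⊤
        · refine ⟨(|c - ‖z₀' - w‖ ^ 2 / 2| + 1) / α, by simp [htop], ?_⟩
          rw [mul_div_cancel₀ _ hα.ne']
          have := abs_nonneg (c - ‖z₀' - w‖ ^ 2 / 2)
          have := le_abs_self (c - ‖z₀' - w‖ ^ 2 / 2)
          linarith
        · set G₀ := (g z₀').toReal with hG₀
          have hgz : g z₀' = (G₀ : EReal) := (EReal.coe_toReal htop (hnobot z₀')).symm
          replace hy : ((c : ℝ) : EReal)
              < ((‖z₀' - w‖ ^ 2 / 2 : ℝ) : EReal) + (α : EReal) * g z₀' := hy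
          rw [hgz] at hy
          have hy' : c < ‖z₀' - w‖ ^ 2 / 2 + α * G₀ := by
            rw [← EReal.coe_mul, ← EReal.coe_add] at hy
            exact_mod_cast hy
          refine ⟨G₀ - (‖z₀' - w‖ ^ 2 / 2 + α * G₀ - c) / (2 * α), ?_, ?_⟩
          · rw [hgz]
            have : (0:ℝ) < (‖z₀' - w‖ ^ 2 / 2 + α * G₀ - c) / (2 * α) :=
              div_pos (by linarith) (by linarith)
            exact_mod_cast (by linarith : G₀ - (‖z₀' - w‖ ^ 2 / 2 + α * G₀ - c) / (2 * α) < G₀)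
          · have h2a : α * ((‖z₀' - w‖ ^ 2 / 2 + α * G₀ - c) / (2 * α))
                = (‖z₀' - w‖ ^ 2 / 2 + α * G₀ - c) / 2 := by
              field_simp
            rw [mul_sub, h2a]
            linarith
      have hev1 : ∀ᶠ z in 𝓝 z₀', ((t : ℝ) : EReal) < g z := hlsc z₀' _ htlt
      have hev2 : ∀ᶠ z in 𝓝 z₀', c - α * t < ‖z - w‖ ^ 2 / 2 :=
        ContinuousAt.eventually_lt continuousAt_const hq.continuousAt (by linarith)
      filter_upwards [hev1, hev2] with z h1 h2
      calc ((c : ℝ) : EReal) < ((‖z - w‖ ^ 2 / 2 + α * t : ℝ) : EReal) := by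
            exact_mod_cast (by linarith : c < ‖z - w‖ ^ 2 / 2 + α * t)
        _ = ((‖z - w‖ ^ 2 / 2 : ℝ) : EReal) + ((α * t : ℝ) : EReal) := by
            rw [← EReal.coe_add]
        _ ≤ h z := by
            refine add_le_add_right ?_ _
            rw [EReal.coe_mul]
            exact mul_le_mul_of_nonneg_left h1.le (by exact_mod_cast hα.le)
  -- h z₀ is finite
  set G₀ := (g z₀).toReal with hG₀def
  have hgz₀ : g z₀ = (G₀ : EReal) := (EReal.coe_toReal hz₀ (hnobot z₀)).symm
  have hhz₀ : h z₀ = ((‖z₀ - w‖ ^ 2 / 2 + α * G₀ : ℝ) : EReal) := by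
    rw [hh]; simp only; rw [hgz₀, ← EReal.coe_mul, ← EReal.coe_add]
  set hp0 : ℝ := ‖z₀ - w‖ ^ 2 / 2 + α * G₀ with hhp0
  -- choose radius
  set C1 : ℝ := α * ‖u‖ with hC1
  set C0 : ℝ := α * (|L| + ‖u‖ * ‖w‖) with hC0
  have hC10 : 0 ≤ C1 := by positivity
  have hC00 : 0 ≤ C0 := by positivity
  set R : ℝ := max (‖z₀ - w‖) (2 * (C1 + C0 + |hp0| + 1)) with hR
  set s : Set (EuclideanSpace ℝ (Fin N)) := Metric.closedBall w R with hsdef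
  have hz₀s : z₀ ∈ s := by
    rw [hsdef, Metric.mem_closedBall, dist_eq_norm]
    exact le_max_left _ _
  have hout : ∀ z, z ∉ s → h z₀ < h z := by
    intro z hz
    rw [hsdef, Metric.mem_closedBall, dist_eq_norm, not_le] at hz
    have hρ : 2 * (C1 + C0 + |hp0| + 1) < ‖z - w‖ := lt_of_le_of_lt (le_max_right _ _) hz
    have hinner : -(‖u‖ * ‖z‖) ≤ ⟪u, z⟫ := by
      have := abs_real_inner_le_norm u z
      rw [abs_le] at this
      linarith [this.1]
    have hznorm : ‖z‖ ≤ ‖w‖ + ‖z - w‖ := by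
      calc ‖z‖ = ‖w + (z - w)‖ := by rw [add_sub_cancel]
        _ ≤ ‖w‖ + ‖z - w‖ := norm_add_le _ _
    have hLb : -|L| ≤ L := neg_abs_le L
    clear_value C1 C0 hp0
    have key : hp0 < ‖z - w‖ ^ 2 / 2 + α * (L + ⟪u, z⟫) := by
      have h1 : α * (L + ⟪u, z⟫) ≥ -C1 * ‖z - w‖ - C0 := by
        have h2 : L + ⟪u, z⟫ ≥ -|L| - ‖u‖ * ‖z‖ := by linarith
        have h3 : ‖u‖ * ‖z‖ ≤ ‖u‖ * (‖w‖ + ‖z - w‖) :=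
          mul_le_mul_of_nonneg_left hznorm (norm_nonneg u)
        have h4 : L + ⟪u, z⟫ ≥ -|L| - ‖u‖ * (‖w‖ + ‖z - w‖) := by linarith
        have := mul_le_mul_of_nonneg_left h4 hα.le
        rw [hC1, hC0]
        nlinarith
      have habs : hp0 ≤ |hp0| := le_abs_self _
      have hρ0 : 0 ≤ ‖z - w‖ := norm_nonneg _
      have habs0 : 0 ≤ |hp0| := abs_nonneg _
      have hρ1 : 1 ≤ ‖z - w‖ := by linarith
      have e1 : ‖z - w‖ * (2 * (C1 + C0 + |hp0| + 1)) ≤ ‖z - w‖ ^ 2 := by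
        rw [pow_two]
        exact mul_le_mul_of_nonneg_left hρ.le hρ0
      have e2 : C0 * 1 ≤ C0 * ‖z - w‖ := mul_le_mul_of_nonneg_left hρ1 hC00
      have e3 : |hp0| * 1 ≤ |hp0| * ‖z - w‖ := mul_le_mul_of_nonneg_left hρ1 (abs_nonneg _)
      have e1' : 2 * (C1 * ‖z - w‖ + C0 * ‖z - w‖ + |hp0| * ‖z - w‖ + ‖z - w‖)
          ≤ ‖z - w‖ ^ 2 := by nlinarith [e1]
      linarith [e1', e2, e3, h1, habs, hρ1]
    calc h z₀ = ((hp0 : ℝ) : EReal) := hhz₀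
      _ < ((‖z - w‖ ^ 2 / 2 + α * (L + ⟪u, z⟫) : ℝ) : EReal) := by exact_mod_cast key
      _ ≤ h z := hlow z
  -- compactness and minimization on s
  have hscomp : IsCompact s := isCompact_closedBall w R
  set m : EReal := sInf (h '' s) with hm
  have hmle : m ≤ h z₀ := sInf_le ⟨z₀, hz₀s, rfl⟩
  have hmnetop : m ≠ ⊤ := fun htop => by
    rw [htop, top_le_iff, hhz₀] at hmle
    exact EReal.coe_ne_top _ hmle
  have hB : ∀ z ∈ s, ((α * L - α * (‖u‖ * (‖w‖ + R)) : ℝ) : EReal) ≤ h z := by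
    intro z hzs
    rw [hsdef, Metric.mem_closedBall, dist_eq_norm] at hzs
    refine le_trans ?_ (hlow z)
    have hznorm : ‖z‖ ≤ ‖w‖ + R := by
      calc ‖z‖ = ‖w + (z - w)‖ := by rw [add_sub_cancel]
        _ ≤ ‖w‖ + ‖z - w‖ := norm_add_le _ _
        _ ≤ ‖w‖ + R := by linarith
    have hinner : -(‖u‖ * ‖z‖) ≤ ⟪u, z⟫ := by
      have := abs_real_inner_le_norm u z
      rw [abs_le] at this
      linarith [this.1]
    have : α * L - α * (‖u‖ * (‖w‖ + R)) ≤ ‖z - w‖ ^ 2 / 2 + α * (L + ⟪u, z⟫) := by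
      have h3 : ‖u‖ * ‖z‖ ≤ ‖u‖ * (‖w‖ + R) :=
        mul_le_mul_of_nonneg_left hznorm (norm_nonneg u)
      nlinarith [sq_nonneg ‖z - w‖, hα.le, mul_le_mul_of_nonneg_left (by linarith : -(‖u‖ * (‖w‖ + R)) ≤ ⟪u, z⟫) hα.le]
    exact_mod_cast this
  have hmnebot : m ≠ ⊥ := by
    intro hbot
    have : ((α * L - α * (‖u‖ * (‖w‖ + R)) : ℝ) : EReal) ≤ m := by
      rw [hm]
      exact le_sInf (by rintro b ⟨z, hzs, rfl⟩; exact hB z hzs)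
    rw [hbot, le_bot_iff] at this
    exact EReal.coe_ne_bot _ this
  set mr : ℝ := m.toReal with hmr
  have hmcoe : m = (mr : EReal) := (EReal.coe_toReal hmnetop hmnebot).symm
  -- minimizing sequence
  have hseq : ∀ k : ℕ, ∃ z ∈ s, h z < ((mr + 1 / (k + 1) : ℝ) : EReal) := by
    intro k
    have hlt : m < ((mr + 1 / (k + 1) : ℝ) : EReal) := by
      rw [hmcoe]
      have hpos : (0:ℝ) < 1 / ((k:ℝ) + 1) := by positivity
      exact_mod_cast (by linarith : mr < mr + 1 / ((k:ℝ) + 1))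
    obtain ⟨b, ⟨z, hzs, rfl⟩, hblt⟩ := sInf_lt_iff.mp (hm ▸ hlt)
    exact ⟨z, hzs, hblt⟩
  choose y hys hylt using hseq
  obtain ⟨a, has, φ, hφ, hstend⟩ := hscomp.tendsto_subseq hys
  -- h a ≤ m
  have hham : h a ≤ m := by
    by_contra hcon
    push_neg at hcon
    rw [hmcoe] at hcon
    obtain ⟨y', hy1', hy2'⟩ := exists_between hcon
    have hy'netop : y' ≠ ⊤ := (hy2'.trans_le le_top).ne
    have hy'nebot : y' ≠ ⊥ := fun hb => by rw [hb] at hy1'; exact (lt_asymm (EReal.bot_lt_coe mr)) (by exact_mod_cast hy1')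
    set c : ℝ := y'.toReal with hc
    have hy'coe : y' = (c : EReal) := (EReal.coe_toReal hy'netop hy'nebot).symm
    rw [hy'coe] at hy1' hy2'
    have hmrc : mr < c := by exact_mod_cast hy1'
    have hev : ∀ᶠ k in atTop, ((c : ℝ) : EReal) < h (y (φ k)) :=
      hstend.eventually (hlsch a _ hy2')
    obtain ⟨K, hK⟩ := exists_nat_gt (1 / (c - mr))
    have hKpos : (0:ℝ) < c - mr := by linarith
    rw [eventually_atTop] at hev
    obtain ⟨K', hK'⟩ := hev
    set k := max K K' with hk
    have h1 := hK' k (le_max_right _ _)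
    have h2 := hylt (φ k)
    have hφk : (K:ℝ) ≤ (φ k : ℝ) := by
      exact_mod_cast le_trans (le_max_left K K') ((hφ.le_apply))
    have hsmall : 1 / ((φ k : ℝ) + 1) < c - mr := by
      have hKφ : 1 / (c - mr) < (φ k : ℝ) + 1 := by linarith
      rw [div_lt_iff₀ (by positivity)]
      rw [div_lt_iff₀ hKpos] at hKφ
      nlinarith
    have : h (y (φ k)) < ((c : ℝ) : EReal) := by
      refine h2.trans_le ?_
      exact_mod_cast (by linarith : mr + 1 / ((φ k : ℝ) + 1) ≤ c)
    exact absurd (this.trans h1) (lt_irrefl _)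
  refine ⟨a, fun z => ?_⟩
  show h a ≤ h z
  by_cases hzs : z ∈ s
  · exact hham.trans (sInf_le ⟨z, hzs, rfl⟩)
  · exact le_trans (hham.trans hmle) (hout z hzs).le

lemma prox_nonexpansive (hproper : ∃ z, g z ≠ ⊤) (hnobot : ∀ z, g z ≠ ⊥)
    (hconv : ∀ (x y : EuclideanSpace ℝ (Fin N)) (a b : ℝ), 0 ≤ a → 0 ≤ b → a + b = 1 →
      g (a • x + b • y) ≤ (a : EReal) * g x + (b : EReal) * g y)
    {α : ℝ} (hα : 0 < α) {w w' p p' : EuclideanSpace ℝ (Fin N)}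
    (hp : IsProxPt g α w p) (hp' : IsProxPt g α w' p') :
    ‖p - p'‖ ≤ ‖w - w'‖ := by
  have hpt := prox_ne_top hproper hnobot hα hp
  have hpt' := prox_ne_top hproper hnobot hα hp'
  have h1 := prox_subgrad hnobot hconv hα hp hpt hpt'
  have h2 := prox_subgrad hnobot hconv hα hp' hpt' hpt
  -- h1 : ⟪w - p, p' - p⟫ ≤ α * (G p' - G p), h2 : ⟪w' - p', p - p'⟫ ≤ α * (G p - G p')
  have hsum : ⟪w - p, p' - p⟫ + ⟪w' - p', p - p'⟫ ≤ 0 := by linarith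
  have iden : ⟪w - p, p' - p⟫ + ⟪w' - p', p - p'⟫
      = ⟪w - w', p' - p⟫ + ‖p' - p‖ ^ 2 := by
    rw [← real_inner_self_eq_norm_sq]
    simp only [inner_sub_left, inner_sub_right]
    rw [real_inner_comm p' p]
    ring
  have hcs := real_inner_le_norm (w - w') (p - p')
  have h3 : ‖p' - p‖ ^ 2 ≤ ⟪w - w', p - p'⟫ := by
    have : ⟪w - w', p - p'⟫ = -⟪w - w', p' - p⟫ := by
      rw [show p - p' = -(p' - p) by abel, inner_neg_right]
    linarith [iden ▸ hsum]
  rw [norm_sub_rev p' p] at h3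
  nlinarith [norm_nonneg (p - p'), norm_nonneg (w - w'), hcs, h3]

lemma residual_scale (hproper : ∃ z, g z ≠ ⊤) (hnobot : ∀ z, g z ≠ ⊥)
    (hconv : ∀ (x y : EuclideanSpace ℝ (Fin N)) (a b : ℝ), 0 ≤ a → 0 ≤ b → a + b = 1 →
      g (a • x + b • y) ≤ (a : EReal) * g x + (b : EReal) * g y)
    {c₁ : ℝ} (hc₁ : 0 < c₁) (hc₁1 : c₁ ≤ 1) {α : ℝ} (hαc : c₁ ≤ α)
    {y v p q : EuclideanSpace ℝ (Fin N)}
    (hp : IsProxPt g α (y - α • v) p) (hq : IsProxPt g 1 (y - v) q) :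
    ‖y - q‖ ≤ (1 / c₁) * ‖y - p‖ := by
  have hα0 : (0 : ℝ) < α := lt_of_lt_of_le hc₁ hαc
  have hpt := prox_ne_top hproper hnobot hα0 hp
  have hqt := prox_ne_top hproper hnobot one_pos hq
  have h1 := prox_subgrad hnobot hconv hα0 hp hpt hqt
  have h2 := prox_subgrad hnobot hconv one_pos hq hqt hpt
  -- h1 : ⟪(y - α•v) - p, q - p⟫ ≤ α * (G q - G p)
  -- h2 : ⟪(y - v) - q, p - q⟫ ≤ 1 * (G p - G q)
  have hsum : ⟪y - α • v - p, q - p⟫ + α * ⟪y - v - q, p - q⟫ ≤ 0 := by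
    nlinarith [mul_le_mul_of_nonneg_left h2 hα0.le]
  set r := y - q with hr
  set s := y - p with hs
  have hv1 : y - α • v - p = s - α • v := by rw [hs]; abel
  have hv2 : q - p = s - r := by rw [hs, hr]; abel
  have hv3 : y - v - q = r - v := by rw [hr]; abel
  have hv4 : p - q = r - s := by rw [hs, hr]; abel
  rw [hv1, hv2, hv3, hv4] at hsum
  have iden : ⟪s - α • v, s - r⟫ + α * ⟪r - v, r - s⟫
      = ‖s‖ ^ 2 + α * ‖r‖ ^ 2 - (1 + α) * ⟪r, s⟫ := by
    rw [← real_inner_self_eq_norm_sq, ← real_inner_self_eq_norm_sq]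
    simp only [inner_sub_left, inner_sub_right, real_inner_smul_left]
    rw [real_inner_comm s r]
    ring
  have hcs := real_inner_le_norm r s
  set a := ‖r‖ with ha
  set b := ‖s‖ with hb
  have ha0 : 0 ≤ a := norm_nonneg _
  have hb0 : 0 ≤ b := norm_nonneg _
  have hquad : α * a ^ 2 - (1 + α) * (a * b) + b ^ 2 ≤ 0 := by
    nlinarith [iden ▸ hsum, hcs, mul_le_mul_of_nonneg_left hcs (by linarith : (0:ℝ) ≤ 1 + α)]
  have hfac : (a - b) * (α * a - b) ≤ 0 := by nlinarith [hquad]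
  rcases mul_nonpos_iff.mp hfac with ⟨h5, h6⟩ | ⟨h5, h6⟩
  · -- 0 ≤ a - b and α a - b ≤ 0 : a ≤ b / α ≤ b / c₁
    rw [div_mul_eq_mul_div, le_div_iff₀ hc₁, one_mul]
    have := mul_le_mul_of_nonneg_right hαc ha0
    linarith
  · -- a ≤ b
    rw [div_mul_eq_mul_div, le_div_iff₀ hc₁, one_mul]
    have := mul_le_mul_of_nonneg_left hc₁1 ha0
    linarith

end AuxLemmas

/-- **Summed residual bound.** For `(x^n)` generated by iPiano with `α_n ≥ c₁ ∈ (0,1]`,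
`β_n ∈ [0,1)` and `x^{-1} = x^0`, for all `N`,
`∑_{n=0}^N ‖r(x^n)‖ ≤ (2/c₁) ∑_{n=0}^N ‖x^{n+1} - x^n‖`,
where `r(x) = x - prox_g(x - ∇f x)` is the proximal residual at step size 1 and
`Q n = prox_g(x^n - ∇f(x^n))`. -/
theorem ipiano_residual_sum_bound
    (f : EuclideanSpace ℝ (Fin N) → ℝ)
    (f' : EuclideanSpace ℝ (Fin N) → EuclideanSpace ℝ (Fin N))
    (hf : ∀ y, HasGradientAt f (f' y) y) (hf' : Continuous f')
    (g : EuclideanSpace ℝ (Fin N) → EReal)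
    (hproper : ∃ z, g z ≠ ⊤) (hnobot : ∀ z, g z ≠ ⊥)
    (hlsc : LowerSemicontinuous g)
    (hconv : ∀ (x y : EuclideanSpace ℝ (Fin N)) (a b : ℝ), 0 ≤ a → 0 ≤ b → a + b = 1 →
      g (a • x + b • y) ≤ (a : EReal) * g x + (b : EReal) * g y)
    (c₁ : ℝ) (hc₁ : 0 < c₁) (hc₁1 : c₁ ≤ 1)
    (α β : ℕ → ℝ) (hα : ∀ n, c₁ ≤ α n) (hβ : ∀ n, 0 ≤ β n ∧ β n < 1)
    (x : ℕ → EuclideanSpace ℝ (Fin N)) (Q : ℕ → EuclideanSpace ℝ (Fin N))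
    -- the iPiano update (with the convention `x^{-1} = x^0`, via truncated subtraction)
    (hup : ∀ n, IsProxPt g (α n)
        (x n - α n • f' (x n) + β n • (x n - x (n - 1))) (x (n + 1)))
    -- `Q n = prox_g(x^n - ∇f(x^n))`, so that `r(x^n) = x^n - Q n`
    (hQ : ∀ n, IsProxPt g 1 (x n - f' (x n)) (Q n)) :
    ∀ M : ℕ, ∑ n ∈ Finset.range (M + 1), ‖x n - Q n‖
        ≤ (2 / c₁) * ∑ n ∈ Finset.range (M + 1), ‖x (n + 1) - x n‖ := by

  intro M
  have hα0 : ∀ n, (0:ℝ) < α n := fun n => hc₁.trans_le (hα n)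
  have hQ0top : g (Q 0) ≠ ⊤ := prox_ne_top hproper hnobot one_pos (hQ 0)
  set u : EuclideanSpace ℝ (Fin N) := (x 0 - f' (x 0)) - Q 0 with hu
  set L : ℝ := (g (Q 0)).toReal - ⟪u, Q 0⟫ with hL
  have hmin : ∀ z, ((L + ⟪u, z⟫ : ℝ) : EReal) ≤ g z := by
    intro z
    by_cases hz : g z = ⊤
    · rw [hz]; exact le_top
    · have hsg := prox_subgrad hnobot hconv one_pos (hQ 0) hQ0top hz
      have hz' : g z = ((g z).toReal : EReal) := (EReal.coe_toReal hz (hnobot z)).symm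
      rw [hz']
      have hinner : ⟪u, z - Q 0⟫ = ⟪u, z⟫ - ⟪u, Q 0⟫ := inner_sub_right u z (Q 0)
      rw [hinner] at hsg
      exact_mod_cast (by linarith : L + ⟪u, z⟫ ≤ (g z).toReal)
  have key : ∀ n, ‖x n - Q n‖
      ≤ (1 / c₁) * (‖x (n + 1) - x n‖ + β n * ‖x n - x (n - 1)‖) := by
    intro n
    obtain ⟨p, hp⟩ := prox_exists hnobot hlsc u L hmin (Q 0) hQ0top (hα0 n)
      (x n - α n • f' (x n))
    have h5 := residual_scale hproper hnobot hconv hc₁ hc₁1 (hα n) hp (hQ n)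
    have h4 := prox_nonexpansive hproper hnobot hconv (hα0 n) (hup n) hp
    have hwd : (x n - α n • f' (x n) + β n • (x n - x (n - 1)))
        - (x n - α n • f' (x n)) = β n • (x n - x (n - 1)) := add_sub_cancel_left _ _
    rw [hwd, norm_smul, Real.norm_eq_abs, abs_of_nonneg (hβ n).1] at h4
    have htri : ‖x n - p‖ ≤ ‖x n - x (n + 1)‖ + ‖x (n + 1) - p‖ := by
      have := dist_triangle (x n) (x (n + 1)) p
      simpa [dist_eq_norm] using this
    rw [norm_sub_rev (x n) (x (n + 1))] at htri
    have h1c : (0:ℝ) ≤ 1 / c₁ := by positivity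
    calc ‖x n - Q n‖ ≤ (1 / c₁) * ‖x n - p‖ := h5
      _ ≤ (1 / c₁) * (‖x (n + 1) - x n‖ + β n * ‖x n - x (n - 1)‖) := by
          apply mul_le_mul_of_nonneg_left _ h1c
          linarith [h4, htri]
  have hsum1 : ∑ n ∈ Finset.range (M + 1), ‖x n - x (n - 1)‖
      ≤ ∑ n ∈ Finset.range (M + 1), ‖x (n + 1) - x n‖ := by
    rw [Finset.sum_range_succ' (fun n => ‖x n - x (n - 1)‖) M]
    simp only [Nat.add_sub_cancel]
    have h0 : ‖x 0 - x (0 - 1)‖ = 0 := by simp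
    rw [h0, add_zero]
    exact Finset.sum_le_sum_of_subset_of_nonneg
      (Finset.range_subset_range.mpr (Nat.le_succ M)) (fun i _ _ => norm_nonneg _)
  have hsum2 : ∑ n ∈ Finset.range (M + 1), β n * ‖x n - x (n - 1)‖
      ≤ ∑ n ∈ Finset.range (M + 1), ‖x n - x (n - 1)‖ :=
    Finset.sum_le_sum fun n _ => mul_le_of_le_one_left (norm_nonneg _) (hβ n).2.le
  have h1c : (0:ℝ) ≤ 1 / c₁ := by positivity
  calc ∑ n ∈ Finset.range (M + 1), ‖x n - Q n‖
      ≤ ∑ n ∈ Finset.range (M + 1),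
          (1 / c₁) * (‖x (n + 1) - x n‖ + β n * ‖x n - x (n - 1)‖) :=
        Finset.sum_le_sum fun n _ => key n
    _ = (1 / c₁) * (∑ n ∈ Finset.range (M + 1), ‖x (n + 1) - x n‖
          + ∑ n ∈ Finset.range (M + 1), β n * ‖x n - x (n - 1)‖) := by
        rw [← Finset.mul_sum, Finset.sum_add_distrib]
    _ ≤ (1 / c₁) * (∑ n ∈ Finset.range (M + 1), ‖x (n + 1) - x n‖
          + ∑ n ∈ Finset.range (M + 1), ‖x (n + 1) - x n‖) := by
        apply mul_le_mul_of_nonneg_left _ h1c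
        exact add_le_add_right (hsum2.trans hsum1) _
    _ = (2 / c₁) * ∑ n ∈ Finset.range (M + 1), ‖x (n + 1) - x n‖ := by ring
end
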